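/- The monoidal product of open-graph tuples is a bifunctor up to the permutation equivalence: for composable tuples Γ : m→n, Γ₀ : n→p and Γ' : m'→n', Γ'₀ : n'→p', the tuple (Γ₀ ∘ Γ) ⊗ (Γ'₀ ∘ Γ') is obtained from (Γ₀ ⊗ Γ'₀) ∘ (Γ ⊗ Γ') by acting with the permutation matrix that reorders the internal vertex blocks (k, k₀, k', k'₀) to (k, k', k₀, k'₀), namely the block matrix P = [[1,0,0,0],[0,0,1,0],[0,1,0,0],[0,0,0,1]] acting as (C,D,E) ↦ (CPᵀ, PD, PEPᵀ). -/

import Mathlib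

open Matrix

/-- Open-graph tuples over F₂ = ZMod 2. -/
structure OGTuple (μ ν κ : Type) where
  A : Matrix μ μ (ZMod 2)
  B : Matrix μ ν (ZMod 2)
  C : Matrix μ κ (ZMod 2)
  D : Matrix κ ν (ZMod 2)
  E : Matrix κ κ (ZMod 2)

/-- Composition of open-graph tuples (Γ first, then Γ₀). -/
def ogComp {μ ν ρ κ κ' : Type} [Fintype ν] (Γ : OGTuple μ ν κ) (Γ' : OGTuple ν ρ κ') :
    OGTuple μ ρ (κ ⊕ κ') where
  A := Γ.A + Γ.B * Γ'.A * Γ.Bᵀ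
  B := Γ.B * Γ'.B
  C := Matrix.fromCols (Γ.C + Γ.B * (Γ'.A + Γ'.Aᵀ) * Γ.Dᵀ) (Γ.B * Γ'.C)
  D := Matrix.fromRows (Γ.D * Γ'.B) Γ'.D
  E := Matrix.fromBlocks (Γ.E + Γ.D * Γ'.A * Γ.Dᵀ) (Γ.D * Γ'.C) 0 Γ'.E

/-- Monoidal (block-diagonal) product of open-graph tuples. -/
def ogTensor {μ ν κ μ' ν' κ' : Type} (Γ : OGTuple μ ν κ) (Γ' : OGTuple μ' ν' κ') :
    OGTuple (μ ⊕ μ') (ν ⊕ ν') (κ ⊕ κ') where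
  A := Matrix.fromBlocks Γ.A 0 0 Γ'.A
  B := Matrix.fromBlocks Γ.B 0 0 Γ'.B
  C := Matrix.fromBlocks Γ.C 0 0 Γ'.C
  D := Matrix.fromBlocks Γ.D 0 0 Γ'.D
  E := Matrix.fromBlocks Γ.E 0 0 Γ'.E

set_option maxHeartbeats 1600000

/-- the monoidal product is a bifunctor up to the permutation equivalence:
`(Γ₀ ∘ Γ) ⊗ (Γ'₀ ∘ Γ')` is obtained from `(Γ₀ ⊗ Γ'₀) ∘ (Γ ⊗ Γ')` by the permutation
reordering the internal vertex blocks `(k, k₀, k', k'₀)` to `(k, k', k₀, k'₀)`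
(acting on the internal-vertex indices of the C-, D- and E-components). -/
theorem ogTensor_bifunctor {m n p m' n' p' k k₀ k' k'₀ : ℕ}
    (Γ : OGTuple (Fin m) (Fin n) (Fin k)) (Γ₀ : OGTuple (Fin n) (Fin p) (Fin k₀))
    (Γ' : OGTuple (Fin m') (Fin n') (Fin k')) (Γ'₀ : OGTuple (Fin n') (Fin p') (Fin k'₀)) :
    letI lhs := ogTensor (ogComp Γ Γ₀) (ogComp Γ' Γ'₀)   -- (Γ₀ ∘ Γ) ⊗ (Γ'₀ ∘ Γ')
    letI rhs := ogComp (ogTensor Γ Γ') (ogTensor Γ₀ Γ'₀) -- (Γ₀ ⊗ Γ'₀) ∘ (Γ ⊗ Γ')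
    letI e := Equiv.sumSumSumComm (Fin k) (Fin k₀) (Fin k') (Fin k'₀)
    lhs.A = rhs.A ∧ lhs.B = rhs.B ∧
    lhs.C = rhs.C.submatrix id e ∧
    lhs.D = rhs.D.submatrix e id ∧
    lhs.E = rhs.E.submatrix e e := by
  refine ⟨?_, ?_, ?_, ?_, ?_⟩
  · ext (i|i) (j|j) <;> simp [ogComp, ogTensor, Matrix.fromBlocks_multiply,
      Matrix.fromBlocks_transpose, Matrix.fromBlocks_add, Matrix.fromCols_apply_inl,
      Matrix.fromCols_apply_inr, Matrix.fromRows_apply_inl, Matrix.fromRows_apply_inr]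
  · ext (i|i) (j|j) <;> simp [ogComp, ogTensor, Matrix.fromBlocks_multiply,
      Matrix.fromBlocks_transpose, Matrix.fromBlocks_add, Matrix.fromCols_apply_inl,
      Matrix.fromCols_apply_inr, Matrix.fromRows_apply_inl, Matrix.fromRows_apply_inr]
  · ext (i|i) ((j|j)|(j|j)) <;> simp [ogComp, ogTensor, Matrix.fromBlocks_multiply,
      Matrix.fromBlocks_transpose, Matrix.fromBlocks_add, Matrix.fromCols_apply_inl,
      Matrix.fromCols_apply_inr, Matrix.fromRows_apply_inl, Matrix.fromRows_apply_inr]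
  · ext ((i|i)|(i|i)) (j|j) <;> simp [ogComp, ogTensor, Matrix.fromBlocks_multiply,
      Matrix.fromBlocks_transpose, Matrix.fromBlocks_add, Matrix.fromCols_apply_inl,
      Matrix.fromCols_apply_inr, Matrix.fromRows_apply_inl, Matrix.fromRows_apply_inr]
  · ext ((i|i)|(i|i)) ((j|j)|(j|j)) <;> simp [ogComp, ogTensor, Matrix.fromBlocks_multiply,
      Matrix.fromBlocks_transpose, Matrix.fromBlocks_add, Matrix.fromCols_apply_inl,
      Matrix.fromCols_apply_inr, Matrix.fromRows_apply_inl, Matrix.fromRows_apply_inr]
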